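/- Let u ≠ v be vertices with v reachable from u, let h* = dist(u, v), let S be the set of shortest paths from u to v, and for each shortest path p ∈ S let D^p_GM = (Π_{k=0}^{h*−1} deg(p_k))^{1/h*} be the geometric mean of the degrees of the first h* vertices of p (all vertices of p except the final endpoint v). Setting D*_GM = min_{p ∈ S} D^p_GM, the entry of the h*-th power of the row-normalized adjacency matrix satisfies (P^{h*})(u, v) ≤ |S| / (D*_GM)^{h*}. -/

import Mathlib

open SimpleGraph Finset

lemma prod_map_inv_real {V : Type*} (f : V → ℝ) (l : List V) :
    (l.map fun w => (f w)⁻¹).prod = ((l.map f).prod)⁻¹ := by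
  induction l with
  | nil => simp
  | cons a l ih => simp [ih, mul_inv, mul_comm]

lemma weight_cons {V : Type*} [Fintype V] [DecidableEq V] (G : SimpleGraph V)
    [DecidableRel G.Adj] {x z y : V} (h : G.Adj x z) (p : G.Walk z y) :
    (((Walk.cons h p).support.dropLast).map fun w => ((G.degree w : ℝ))⁻¹).prod
      = ((G.degree x : ℝ))⁻¹ *
        ((p.support.dropLast).map fun w => ((G.degree w : ℝ))⁻¹).prod := by
  rw [Walk.support_cons, List.dropLast_cons_of_ne_nil p.support_ne_nil,
    List.map_cons, List.prod_cons]

lemma pow_entry_eq {V : Type*} [Fintype V] [DecidableEq V]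
    (G : SimpleGraph V) [DecidableRel G.Adj]
    (P : Matrix V V ℝ)
    (hP : ∀ x y : V, P x y = if G.Adj x y then ((G.degree x : ℝ))⁻¹ else 0)
    (n : ℕ) (x y : V) :
    (P ^ n) x y = ∑ p ∈ G.finsetWalkLength n x y,
      ((p.support.dropLast).map fun w => ((G.degree w : ℝ))⁻¹).prod := by
  induction n generalizing x y with
  | zero =>
    obtain rfl | h := eq_or_ne x y
    · simp [finsetWalkLength, Matrix.one_apply]
    · simp [finsetWalkLength, h, Matrix.one_apply]
  | succ n ih =>
    rw [pow_succ', Matrix.mul_apply]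
    show _ = ∑ p ∈ Finset.univ.biUnion fun (w : G.neighborSet x) =>
      (G.finsetWalkLength n w y).map ⟨fun p => Walk.cons w.property p, fun _ _ => by intro hc; cases hc; rfl⟩, _
    rw [Finset.sum_biUnion]
    · have key : ∀ (w : G.neighborSet x),
          (∑ p ∈ (G.finsetWalkLength n (w : V) y).map
              ⟨fun p => Walk.cons w.property p, fun _ _ => by intro hc; cases hc; rfl⟩,
            ((p.support.dropLast).map fun z => ((G.degree z : ℝ))⁻¹).prod)
          = P x w * (P ^ n) w y := by
        intro w
        rw [Finset.sum_map, ih, hP, if_pos (by exact w.property), Finset.mul_sum]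
        exact Finset.sum_congr rfl fun p _ => weight_cons G w.property p
      simp only [key]
      rw [← Finset.sum_subtype (p := fun j => j ∈ G.neighborSet x) (G.neighborFinset x)
        (fun j => Set.mem_toFinset) (fun j => P x j * (P ^ n) j y)]
      refine (Finset.sum_subset (Finset.subset_univ _) fun j _ hj => ?_).symm
      rw [G.mem_neighborFinset] at hj
      rw [hP, if_neg hj, zero_mul]
    · rintro ⟨a, ha⟩ - ⟨b, hb⟩ - hab
      rw [Function.onFun, Finset.disjoint_left]
      rintro p hp hq
      simp only [Finset.mem_map, Function.Embedding.coeFn_mk] at hp hq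
      obtain ⟨pa, _, rfl⟩ := hp
      obtain ⟨pb, _, h⟩ := hq
      cases h
      simp at hab

/-- Let `u ≠ v` with `v` reachable from `u`, `h* = dist u v`, and let `S` be the set
of shortest paths (walks of length `h*`) from `u` to `v`.  For a shortest path `p`
let `D^p_GM = (∏ₖ deg pₖ)^{1/h*}` be the geometric mean of the degrees of the first
`h*` vertices of `p`, and let `D*_GM` be the minimum of these over `S`.  Then the
`(u,v)` entry of `P ^ h*` is at most `|S| / (D*_GM)^{h*}`. -/
theorem rowNormalized_pow_dist_entry_le
    {V : Type*} [Fintype V] [DecidableEq V]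
    (G : SimpleGraph V) [DecidableRel G.Adj]
    (hdeg : ∀ w : V, 0 < G.degree w)
    (P : Matrix V V ℝ)
    (hP : ∀ x y : V, P x y = if G.Adj x y then ((G.degree x : ℝ))⁻¹ else 0)
    (u v : V) (hne : u ≠ v) (hr : G.Reachable u v) :
    (P ^ G.dist u v) u v
      ≤ ((G.finsetWalkLength (G.dist u v) u v).card : ℝ)
          / (sInf ((fun p : G.Walk u v =>
                (((p.support.dropLast).map fun x => (G.degree x : ℝ)).prod)
                  ^ ((G.dist u v : ℝ)⁻¹))
              '' {p : G.Walk u v | p.length = G.dist u v})) ^ (G.dist u v) := by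
  set h := G.dist u v with hh
  have hpos : 0 < h := by
    have := hr.pos_dist_of_ne hne
    omega
  set g : G.Walk u v → ℝ := fun p =>
    (((p.support.dropLast).map fun x => (G.degree x : ℝ)).prod) ^ ((h : ℝ)⁻¹) with hg
  set T : Set ℝ := g '' {p : G.Walk u v | p.length = h} with hT
  -- product of degrees is positive
  have hprodpos : ∀ p : G.Walk u v,
      0 < ((p.support.dropLast).map fun x => (G.degree x : ℝ)).prod := by
    intro p
    apply List.prod_pos
    intro a ha
    simp only [List.mem_map] at ha
    obtain ⟨z, _, rfl⟩ := ha
    exact_mod_cast hdeg z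
  have hgpos : ∀ p : G.Walk u v, 0 < g p := fun p =>
    Real.rpow_pos_of_pos (hprodpos p) _
  obtain ⟨p0, hp0⟩ := hr.exists_walk_length_eq_dist
  have hTne : T.Nonempty := ⟨g p0, ⟨p0, hp0, rfl⟩⟩
  have hTfin : T.Finite := by
    apply Set.Finite.image
    rw [← G.coe_finsetWalkLength_eq]
    exact (G.finsetWalkLength h u v).finite_toSet
  have hmem : sInf T ∈ T := hTne.csInf_mem hTfin
  obtain ⟨q0, hq0len, hq0⟩ := hmem
  have hcpos : 0 < sInf T := hq0 ▸ hgpos q0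
  -- key: for each shortest walk p, (sInf T)^h ≤ prod of degrees of p
  have hpow : ∀ p : G.Walk u v, p.length = h →
      (sInf T) ^ h ≤ ((p.support.dropLast).map fun x => (G.degree x : ℝ)).prod := by
    intro p hp
    have hle : sInf T ≤ g p := csInf_le hTfin.bddBelow ⟨p, hp, rfl⟩
    calc (sInf T) ^ h ≤ (g p) ^ h := pow_le_pow_left₀ hcpos.le hle h
      _ = ((p.support.dropLast).map fun x => (G.degree x : ℝ)).prod := by
          rw [hg]
          rw [← Real.rpow_natCast (_ ^ _) h, ← Real.rpow_mul (hprodpos p).le,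
            inv_mul_cancel₀ (by exact_mod_cast hpos.ne'), Real.rpow_one]
  rw [pow_entry_eq G P hP]
  rw [div_eq_mul_inv]
  calc ∑ p ∈ G.finsetWalkLength h u v,
        ((p.support.dropLast).map fun w => ((G.degree w : ℝ))⁻¹).prod
      ≤ ∑ p ∈ G.finsetWalkLength h u v, ((sInf T) ^ h)⁻¹ := by
        apply Finset.sum_le_sum
        intro p hp
        rw [prod_map_inv_real]
        exact inv_anti₀ (pow_pos hcpos h)
          (hpow p (SimpleGraph.mem_finsetWalkLength_iff.mp hp))
    _ = ((G.finsetWalkLength h u v).card : ℝ) * ((sInf T) ^ h)⁻¹ := by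
        rw [Finset.sum_const, nsmul_eq_mul]
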